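/- In the unravelling M^{un(w)}, the complete intuitionistic type of a tuple depends only on the last world of the sequence: for ū_n, v̄_k ∈ W^{un(w)} with u_n = v_k, and any ā_m ∈ A^m_{v_k}, we have Tp(M^{un(w)}, ū_n, ā_m ⊙ ū_n) = Tp(M^{un(w)}, v̄_k, ā_m ⊙ v̄_k). -/

import Mathlib

set_option linter.unusedVariables false

universe u

/-- A first-order signature: predicate symbols with arities, and constant symbols. -/
structure Sig : Type (u + 1) where
  Pred : Type u
  arity : Pred → ℕ
  Const : Type u

/-- A first-order Kripke `S`-model with ambient type `W` of worlds and `D` of objects. -/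
structure KModel (S : Sig.{u}) (W : Type*) (D : Type*) where
  worlds : Set W
  rel : W → W → Prop
  rel_mem : ∀ {a b}, rel a b → a ∈ worlds ∧ b ∈ worlds
  rel_refl : ∀ {a}, a ∈ worlds → rel a a
  rel_trans : ∀ {a b c}, rel a b → rel b c → rel a c
  rel_antisymm : ∀ {a b}, rel a b → rel b a → a = b
  dom : W → Set D
  dom_disjoint : ∀ {a b}, a ∈ worlds → b ∈ worlds → a ≠ b → Disjoint (dom a) (dom b)
  interpP : (w : W) → (P : S.Pred) → Set (Fin (S.arity P) → D)
  interpC : W → S.Const → D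
  interpC_mem : ∀ {a}, a ∈ worlds → ∀ c, interpC a c ∈ dom a
  H : W → W → D → D
  H_mem : ∀ {a b}, rel a b → ∀ {x}, x ∈ dom a → H a b x ∈ dom b
  H_id : ∀ {a}, a ∈ worlds → ∀ {x}, x ∈ dom a → H a a x = x
  H_comp : ∀ {a b c}, rel a b → rel b c → ∀ {x}, x ∈ dom a → H a c x = H b c (H a b x)
  H_pred : ∀ {a b}, rel a b → ∀ {P : S.Pred} {t : Fin (S.arity P) → D}, t ∈ interpP a P →
    (∀ i, t i ∈ dom a) → (fun i => H a b (t i)) ∈ interpP b P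
  H_const : ∀ {a b}, rel a b → ∀ c, H a b (interpC a c) = interpC b c

variable {S T : Sig} {W D : Type*}

/-- The total domain `⋃_{w ∈ W} A_w` of a Kripke model. -/
def totalDom (M : KModel S W D) : Set D := ⋃ w ∈ M.worlds, M.dom w

/-- `M` is a submodel of `N`. -/
def Submodel (M N : KModel S W D) : Prop :=
  M.worlds ⊆ N.worlds ∧
  (∀ a b, M.rel a b ↔ N.rel a b ∧ a ∈ M.worlds ∧ b ∈ M.worlds) ∧
  (∀ w ∈ M.worlds, M.dom w ⊆ N.dom w) ∧
  (∀ w ∈ M.worlds, ∀ (P : S.Pred) (t : Fin (S.arity P) → D),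
      (∀ i, t i ∈ M.dom w) → (t ∈ M.interpP w P ↔ t ∈ N.interpP w P)) ∧
  (∀ w ∈ M.worlds, ∀ c, M.interpC w c = N.interpC w c) ∧
  (∀ a b, M.rel a b → ∀ x ∈ M.dom a, M.H a b x = N.H a b x)

/-- Extensional equality of Kripke models (agreement on all meaningful components). -/
def MEq (M N : KModel S W D) : Prop :=
  M.worlds = N.worlds ∧
  (∀ a b, M.rel a b ↔ N.rel a b) ∧
  (∀ w ∈ M.worlds, M.dom w = N.dom w) ∧
  (∀ w ∈ M.worlds, ∀ (P : S.Pred) (t : Fin (S.arity P) → D),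
      (∀ i, t i ∈ M.dom w) → (t ∈ M.interpP w P ↔ t ∈ N.interpP w P)) ∧
  (∀ w ∈ M.worlds, ∀ c, M.interpC w c = N.interpC w c) ∧
  (∀ a b, M.rel a b → ∀ x ∈ M.dom a, M.H a b x = N.H a b x)

/-- Terms of the language: variables (de Bruijn, among `n` free variables) and constants. -/
inductive Term (S : Sig.{u}) (n : ℕ) : Type u where
  | var : Fin n → Term S n
  | const : S.Const → Term S n

/-- Intuitionistic first-order formulas (without equality) with free variables among `Fin n`. -/
inductive Fml (S : Sig.{u}) : ℕ → Type u where
  | atom {n} (P : S.Pred) (ts : Fin (S.arity P) → Term S n) : Fml S n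
  | bot {n} : Fml S n
  | and {n} : Fml S n → Fml S n → Fml S n
  | or {n} : Fml S n → Fml S n → Fml S n
  | imp {n} : Fml S n → Fml S n → Fml S n
  | all {n} : Fml S (n + 1) → Fml S n
  | ex {n} : Fml S (n + 1) → Fml S n

/-- Evaluation of a term at a world under an assignment. -/
def Term.eval (M : KModel S W D) (w : W) {n : ℕ} (ρ : Fin n → D) : Term S n → D
  | .var i => ρ i
  | .const c => M.interpC w c

/-- Kripke satisfaction for intuitionistic first-order logic. -/
def Sat (M : KModel S W D) : ∀ {n : ℕ}, W → Fml S n → (Fin n → D) → Prop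
  | _, w, .atom P ts, ρ => (fun i => Term.eval M w ρ (ts i)) ∈ M.interpP w P
  | _, _, .bot, _ => False
  | _, w, .and φ ψ, ρ => Sat M w φ ρ ∧ Sat M w ψ ρ
  | _, w, .or φ ψ, ρ => Sat M w φ ρ ∨ Sat M w ψ ρ
  | _, w, .imp φ ψ, ρ => ∀ v, M.rel w v →
      (Sat M v φ (fun i => M.H w v (ρ i)) → Sat M v ψ (fun i => M.H w v (ρ i)))
  | _, w, .all φ, ρ => ∀ v, M.rel w v → ∀ a ∈ M.dom v,
      Sat M v φ (Fin.snoc (fun i => M.H w v (ρ i)) a)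
  | _, w, .ex φ, ρ => ∃ a ∈ M.dom w, Sat M w φ (Fin.snoc ρ a)

/-- The positive complete type of a tuple at a world. -/
def TpPos (M : KModel S W D) (w : W) {n : ℕ} (a : Fin n → D) : Set (Fml S n) :=
  {φ | Sat M w φ a}

/-- The complete type: the pair of the sets of formulas true resp. false of the tuple. -/
def Tp (M : KModel S W D) (w : W) {n : ℕ} (a : Fin n → D) :
    Set (Fml S n) × Set (Fml S n) :=
  ({φ | Sat M w φ a}, {φ | ¬ Sat M w φ a})

/-- `M` is an IL-elementary submodel of `N`. -/
def ElemSub (M N : KModel S W D) : Prop :=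
  Submodel M N ∧
  ∀ w ∈ M.worlds, ∀ (n : ℕ) (a : Fin n → D), (∀ i, a i ∈ M.dom w) → Tp M w a = Tp N w a
/-- The submodel of `M` generated by the upward cone of `w`. -/
def genSub (M : KModel S W D) (w : W) : KModel S W D where
  worlds := {v | M.rel w v}
  rel a b := M.rel w a ∧ M.rel a b
  rel_mem := fun {a b} h => ⟨h.1, M.rel_trans h.1 h.2⟩
  rel_refl := fun {a} ha => ⟨ha, M.rel_refl (M.rel_mem ha).2⟩
  rel_trans := fun {a b c} h h' => ⟨h.1, M.rel_trans h.2 h'.2⟩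
  rel_antisymm := fun {a b} h h' => M.rel_antisymm h.2 h'.2
  dom := M.dom
  dom_disjoint := fun {a b} ha hb hne => M.dom_disjoint (M.rel_mem ha).2 (M.rel_mem hb).2 hne
  interpP := M.interpP
  interpC := M.interpC
  interpC_mem := fun {a} ha c => M.interpC_mem (M.rel_mem ha).2 c
  H := M.H
  H_mem := fun {a b} h {x} hx => M.H_mem h.2 hx
  H_id := fun {a} ha {x} hx => M.H_id (M.rel_mem ha).2 hx
  H_comp := fun {a b c} h h' {x} hx => M.H_comp h.2 h'.2 hx
  H_pred := fun {a b} h {P t} ht hdom => M.H_pred h.2 ht hdom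
  H_const := fun {a b} h c => M.H_const h.2 c

/-- Extension of a signature by `n` fresh pairwise distinct constants. -/
def Sig.addConsts (S : Sig.{u}) (n : ℕ) : Sig.{u} where
  Pred := S.Pred
  arity := S.arity
  Const := S.Const ⊕ Fin n

/-- A morphism of signatures (arity preserving). -/
structure SigHom (S T : Sig) where
  predMap : S.Pred → T.Pred
  constMap : S.Const → T.Const
  arity_eq : ∀ P, T.arity (predMap P) = S.arity P

/-- The inclusion of a signature into its extension by fresh constants. -/
def Sig.incConsts (S : Sig) (n : ℕ) : SigHom S (S.addConsts n) :=
  ⟨id, Sum.inl, fun _ => rfl⟩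

/-- Reduct of a model along a signature morphism. -/
def reductHom (r : SigHom S T) (M : KModel T W D) : KModel S W D where
  worlds := M.worlds
  rel := M.rel
  rel_mem := M.rel_mem
  rel_refl := M.rel_refl
  rel_trans := M.rel_trans
  rel_antisymm := M.rel_antisymm
  dom := M.dom
  dom_disjoint := M.dom_disjoint
  interpP w P := {t | (fun i => t (Fin.cast (r.arity_eq P) i)) ∈ M.interpP w (r.predMap P)}
  interpC w c := M.interpC w (r.constMap c)
  interpC_mem := fun {a} ha c => M.interpC_mem ha _
  H := M.H
  H_mem := M.H_mem
  H_id := M.H_id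
  H_comp := M.H_comp
  H_pred := fun {a b} h {P t} ht hdom => M.H_pred h ht (fun i => hdom _)
  H_const := fun {a b} h c => M.H_const h _

/-- The canonical expansion `([M,w], c̄/ā)` of the generated submodel `[M,w]` by fresh
constants denoting `ā` at `w`. -/
def constExt (M : KModel S W D) (w : W) {n : ℕ} (a : Fin n → D)
    (hw : w ∈ M.worlds) (ha : ∀ i, a i ∈ M.dom w) : KModel (S.addConsts n) W D where
  worlds := {v | M.rel w v}
  rel a b := M.rel w a ∧ M.rel a b
  rel_mem := fun {a b} h => ⟨h.1, M.rel_trans h.1 h.2⟩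
  rel_refl := fun {a} ha => ⟨ha, M.rel_refl (M.rel_mem ha).2⟩
  rel_trans := fun {a b c} h h' => ⟨h.1, M.rel_trans h.2 h'.2⟩
  rel_antisymm := fun {a b} h h' => M.rel_antisymm h.2 h'.2
  dom := M.dom
  dom_disjoint := fun {a b} ha hb hne => M.dom_disjoint (M.rel_mem ha).2 (M.rel_mem hb).2 hne
  interpP := M.interpP
  interpC v c := Sum.elim (M.interpC v) (fun i => M.H w v (a i)) c
  interpC_mem := fun {v} hv c => by
    cases c with
    | inl c => exact M.interpC_mem (M.rel_mem hv).2 c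
    | inr i => exact M.H_mem hv (ha i)
  H := M.H
  H_mem := fun {a b} h {x} hx => M.H_mem h.2 hx
  H_id := fun {a} ha {x} hx => M.H_id (M.rel_mem ha).2 hx
  H_comp := fun {a b c} h h' {x} hx => M.H_comp h.2 h'.2 hx
  H_pred := fun {a b} h {P t} ht hdom => M.H_pred h.2 ht hdom
  H_const := fun {u v} h c => by
    cases c with
    | inl c => exact M.H_const h.2 c
    | inr i => exact (M.H_comp h.1 h.2 (ha i)).symm

/-- Translation of terms along a signature morphism. -/
def mapTerm (r : SigHom S T) {n : ℕ} : Term S n → Term T n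
  | .var i => .var i
  | .const c => .const (r.constMap c)

/-- Translation of formulas along a signature morphism. -/
def mapFml (r : SigHom S T) : ∀ {n : ℕ}, Fml S n → Fml T n
  | _, .atom P ts => .atom (r.predMap P) (fun i => mapTerm r (ts (Fin.cast (r.arity_eq P) i)))
  | _, .bot => .bot
  | _, .and φ ψ => .and (mapFml r φ) (mapFml r ψ)
  | _, .or φ ψ => .or (mapFml r φ) (mapFml r ψ)
  | _, .imp φ ψ => .imp (mapFml r φ) (mapFml r ψ)
  | _, .all φ => .all (mapFml r φ)
  | _, .ex φ => .ex (mapFml r φ)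

/-- The canonical identification of `Θ ∪ {c̄_{n+1}}` with `(Θ ∪ {c̄_n}) ∪ {c_{n+1}}`. -/
def flattenHom (S : Sig) (n : ℕ) : SigHom (S.addConsts (n + 1)) ((S.addConsts n).addConsts 1) where
  predMap := id
  constMap := fun c =>
    match c with
    | .inl c => .inl (.inl c)
    | .inr i => if h : (i : ℕ) < n then .inl (.inr ⟨i, h⟩) else .inr 0
  arity_eq := fun _ => rfl

section Hetero

variable {W₁ D₁ W₂ D₂ : Type*}

/-- `(g,h)` is an isomorphism from `M` onto `N`. -/
def IsIso (M : KModel S W₁ D₁) (N : KModel S W₂ D₂) (g : D₁ → D₂) (h : W₁ → W₂) : Prop :=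
  Set.BijOn h M.worlds N.worlds ∧
  Set.BijOn g (totalDom M) (totalDom N) ∧
  (∀ a b, a ∈ M.worlds → b ∈ M.worlds → (M.rel a b ↔ N.rel (h a) (h b))) ∧
  (∀ w ∈ M.worlds, Set.BijOn g (M.dom w) (N.dom (h w))) ∧
  (∀ w ∈ M.worlds, ∀ (P : S.Pred) (t : Fin (S.arity P) → D₁), (∀ i, t i ∈ M.dom w) →
      (t ∈ M.interpP w P ↔ (fun i => g (t i)) ∈ N.interpP (h w) P)) ∧
  (∀ w ∈ M.worlds, ∀ c, g (M.interpC w c) = N.interpC (h w) c) ∧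
  (∀ a b, M.rel a b → ∀ x ∈ M.dom a, g (M.H a b x) = N.H (h a) (h b) (g x))

/-- `(g,h)` is an IL-elementary embedding of `M` into `N`. -/
def IsElemEmbed (M : KModel S W₁ D₁) (N : KModel S W₂ D₂) (g : D₁ → D₂) (h : W₁ → W₂) : Prop :=
  Set.InjOn h M.worlds ∧
  Set.InjOn g (totalDom M) ∧
  (∀ a b, a ∈ M.worlds → b ∈ M.worlds → (M.rel a b ↔ N.rel (h a) (h b))) ∧
  (∀ w ∈ M.worlds, Set.MapsTo g (M.dom w) (N.dom (h w))) ∧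
  (∀ a b, M.rel a b → ∀ x ∈ M.dom a, g (M.H a b x) = N.H (h a) (h b) (g x)) ∧
  (∀ w ∈ M.worlds, ∀ (n : ℕ) (a : Fin n → D₁), (∀ i, a i ∈ M.dom w) →
      Tp M w a = Tp N (h w) (fun i => g (a i)))

/-- The conditions (atom), (s-back), (obj-forth), (obj-back) of an IL-asimulation, for
the direction from `M₁` to `M₂`, with partner family `G` for the converse direction. -/
def AsimDir (M₁ : KModel S W₁ D₁) (M₂ : KModel S W₂ D₂)
    (F : ∀ k : ℕ, W₁ → (Fin k → D₁) → W₂ → (Fin k → D₂) → Prop)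
    (G : ∀ k : ℕ, W₂ → (Fin k → D₂) → W₁ → (Fin k → D₁) → Prop) : Prop :=
  ∀ (k : ℕ) (w : W₁) (α : Fin k → D₁) (v : W₂) (β : Fin k → D₂),
    F k w α v β → (∀ i, α i ∈ M₁.dom w) → (∀ i, β i ∈ M₂.dom v) →
    ((∀ (P : S.Pred) (ts : Fin (S.arity P) → Term S k),
        Sat M₁ w (.atom P ts) α → Sat M₂ v (.atom P ts) β) ∧
     (∀ t, M₂.rel v t → ∃ u, M₁.rel w u ∧
        F k u (fun i => M₁.H w u (α i)) t (fun i => M₂.H v t (β i)) ∧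
        G k t (fun i => M₂.H v t (β i)) u (fun i => M₁.H w u (α i))) ∧
     (∀ α' ∈ M₁.dom w, ∃ β' ∈ M₂.dom v,
        F (k + 1) w (Fin.snoc α α') v (Fin.snoc β β')) ∧
     (∀ t, M₂.rel v t → ∀ β' ∈ M₂.dom t, ∃ u, M₁.rel w u ∧ ∃ α' ∈ M₁.dom u,
        F (k + 1) u (Fin.snoc (fun i => M₁.H w u (α i)) α')
          t (Fin.snoc (fun i => M₂.H v t (β i)) β')))

/-- `(F, G)` is an IL-asimulation (in both directions) between `M₁` and `M₂`. -/
def IsAsim (M₁ : KModel S W₁ D₁) (M₂ : KModel S W₂ D₂)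
    (F : ∀ k : ℕ, W₁ → (Fin k → D₁) → W₂ → (Fin k → D₂) → Prop)
    (G : ∀ k : ℕ, W₂ → (Fin k → D₂) → W₁ → (Fin k → D₁) → Prop) : Prop :=
  AsimDir M₁ M₂ F G ∧ AsimDir M₂ M₁ G F

/-- `(F, G)` is an IL-asimulation from `(M₁, w₁, ā)` to `(M₂, w₂, b̄)`. -/
def AsimFrom (M₁ : KModel S W₁ D₁) (w₁ : W₁) {n : ℕ} (a : Fin n → D₁)
    (M₂ : KModel S W₂ D₂) (w₂ : W₂) (b : Fin n → D₂)
    (F : ∀ k : ℕ, W₁ → (Fin k → D₁) → W₂ → (Fin k → D₂) → Prop)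
    (G : ∀ k : ℕ, W₂ → (Fin k → D₂) → W₁ → (Fin k → D₁) → Prop) : Prop :=
  IsAsim M₁ M₂ F G ∧ F n w₁ a w₂ b

end Hetero

/-- `E` is a congruence on the Kripke model `M`. -/
def IsCong (M : KModel S W D) (E : W → D → D → Prop) : Prop :=
  (∀ w ∈ M.worlds, ∀ a ∈ M.dom w, E w a a) ∧
  (∀ w ∈ M.worlds, ∀ a b, E w a b → E w b a) ∧
  (∀ w ∈ M.worlds, ∀ a b c, E w a b → E w b c → E w a c) ∧
  (∀ w ∈ M.worlds, ∀ a b, E w a b → a ∈ M.dom w ∧ b ∈ M.dom w) ∧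
  (∀ a b, M.rel a b → ∀ x y, E a x y → E b (M.H a b x) (M.H a b y)) ∧
  (∀ w ∈ M.worlds, ∀ (P : S.Pred) (t t' : Fin (S.arity P) → D),
      (∀ i, E w (t i) (t' i)) → (t ∈ M.interpP w P ↔ t' ∈ M.interpP w P))

/-- `Q` is the quotient of `M` by the congruence `E`: same worlds and order, domains of
equivalence classes, induced interpretations and homomorphisms. -/
def IsQuotient (M : KModel S W D) (E : W → D → D → Prop) (Q : KModel S W (Set D)) : Prop :=
  Q.worlds = M.worlds ∧
  (∀ a b, Q.rel a b ↔ M.rel a b) ∧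
  (∀ w ∈ M.worlds, Q.dom w = {s | ∃ a ∈ M.dom w, s = {b | E w a b}}) ∧
  (∀ w ∈ M.worlds, ∀ (P : S.Pred) (T : Fin (S.arity P) → Set D), (∀ i, T i ∈ Q.dom w) →
      (T ∈ Q.interpP w P ↔ ∃ t ∈ M.interpP w P, ∀ i, T i = {b | E w (t i) b})) ∧
  (∀ w ∈ M.worlds, ∀ c, Q.interpC w c = {b | E w (M.interpC w c) b}) ∧
  (∀ a b, M.rel a b → ∀ x ∈ M.dom a, Q.H a b {y | E a x y} = {y | E b (M.H a b x) y})

section Unravel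

/-- The worlds of the unravelling of `(M, w)`: finite `≺`-increasing sequences starting at `w`. -/
def unChains (M : KModel S W D) (w : W) : Set (List W) :=
  {l | l ≠ [] ∧ l.head? = some w ∧ l.Chain' M.rel}

/-- The one-step extension relation on chains. -/
def unStep (M : KModel S W D) (w : W) (s t : List W) : Prop :=
  s ∈ unChains M w ∧ t ∈ unChains M w ∧ ∃ u, t = s ++ [u]

/-- The accessibility relation of the unravelling: the reflexive-transitive closure of the
one-step extension relation, restricted to chains. -/
def unRel (M : KModel S W D) (w : W) (s t : List W) : Prop :=
  s ∈ unChains M w ∧ t ∈ unChains M w ∧ Relation.ReflTransGen (unStep M w) s t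

/-- `U` is the intuitionistic unravelling of `(M, w)`. -/
def IsUnravelling (M : KModel S W D) (w : W) (U : KModel S (List W) (D × List W)) : Prop :=
  U.worlds = unChains M w ∧
  (∀ s t, U.rel s t ↔ unRel M w s t) ∧
  (∀ l ∈ unChains M w, U.dom l = {p | p.2 = l ∧ p.1 ∈ M.dom (l.getLastD w)}) ∧
  (∀ l ∈ unChains M w, ∀ (P : S.Pred) (t : Fin (S.arity P) → D × List W),
      (t ∈ U.interpP l P ↔ ∃ t₀ ∈ M.interpP (l.getLastD w) P, ∀ i, t i = (t₀ i, l))) ∧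
  (∀ l ∈ unChains M w, ∀ c, U.interpC l c = (M.interpC (l.getLastD w) c, l)) ∧
  (∀ s t, unRel M w s t → ∀ x ∈ M.dom (s.getLastD w),
      U.H s t (x, s) = (M.H (s.getLastD w) (t.getLastD w) x, t))

end Unravel

/-- `(Γ, Δ)` is a successor IL-type of `(M, w, ā)`. -/
def SuccType (M : KModel S W D) (w : W) {n : ℕ} (a : Fin n → D) (Γ Δ : Set (Fml S n)) : Prop :=
  ∀ Γ' Δ' : Set (Fml S n), Γ' ⊆ Γ → Δ' ⊆ Δ → Γ'.Finite → Δ'.Finite →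
    ∃ v, M.rel w v ∧ (∀ φ ∈ Γ', Sat M v φ (fun i => M.H w v (a i))) ∧
      (∀ φ ∈ Δ', ¬ Sat M v φ (fun i => M.H w v (a i)))

/-- `Ξ` is an existential IL-type of `(M, w, ā)`. -/
def ExType (M : KModel S W D) (w : W) {n : ℕ} (a : Fin n → D) (Ξ : Set (Fml S (n + 1))) : Prop :=
  ∀ Ξ' : Set (Fml S (n + 1)), Ξ' ⊆ Ξ → Ξ'.Finite →
    ∃ b ∈ M.dom w, ∀ φ ∈ Ξ', Sat M w φ (Fin.snoc a b)

/-- `Ξ` is a universal IL-type of `(M, w, ā)`. -/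
def UnivType (M : KModel S W D) (w : W) {n : ℕ} (a : Fin n → D) (Ξ : Set (Fml S (n + 1))) : Prop :=
  ∀ Ξ' : Set (Fml S (n + 1)), Ξ' ⊆ Ξ → Ξ'.Finite →
    ∃ v, M.rel w v ∧ ∃ b ∈ M.dom v, ∀ φ ∈ Ξ', ¬ Sat M v φ (Fin.snoc (fun i => M.H w v (a i)) b)

/-- A model is IL-saturated iff it realizes all of its IL-types. -/
def Saturated (M : KModel S W D) : Prop :=
  ∀ w ∈ M.worlds, ∀ (n : ℕ) (a : Fin n → D), (∀ i, a i ∈ M.dom w) →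
    (∀ Γ Δ : Set (Fml S n), SuccType M w a Γ Δ →
       ∃ v, M.rel w v ∧ (∀ φ ∈ Γ, Sat M v φ (fun i => M.H w v (a i))) ∧
         (∀ φ ∈ Δ, ¬ Sat M v φ (fun i => M.H w v (a i)))) ∧
    (∀ Ξ : Set (Fml S (n + 1)), ExType M w a Ξ →
       ∃ b ∈ M.dom w, ∀ φ ∈ Ξ, Sat M w φ (Fin.snoc a b)) ∧
    (∀ Ξ : Set (Fml S (n + 1)), UnivType M w a Ξ →
       ∃ v, M.rel w v ∧ ∃ b ∈ M.dom v, ∀ φ ∈ Ξ, ¬ Sat M v φ (Fin.snoc (fun i => M.H w v (a i)) b))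

/-- `U` is the componentwise union of the countable chain `Ms`. -/
def IsChainUnion (Ms : ℕ → KModel S W D) (U : KModel S W D) : Prop :=
  U.worlds = ⋃ k, (Ms k).worlds ∧
  (∀ a b, U.rel a b ↔ ∃ k, (Ms k).rel a b) ∧
  (∀ w ∈ U.worlds, U.dom w = {x | ∃ k, w ∈ (Ms k).worlds ∧ x ∈ (Ms k).dom w}) ∧
  (∀ w ∈ U.worlds, ∀ (P : S.Pred) (t : Fin (S.arity P) → D), (∀ i, t i ∈ U.dom w) →
      (t ∈ U.interpP w P ↔ ∃ k, w ∈ (Ms k).worlds ∧ (∀ i, t i ∈ (Ms k).dom w) ∧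
        t ∈ (Ms k).interpP w P)) ∧
  (∀ w, ∀ k, w ∈ (Ms k).worlds → ∀ c, U.interpC w c = (Ms k).interpC w c) ∧
  (∀ a b, ∀ k, (Ms k).rel a b → ∀ x ∈ (Ms k).dom a, U.H a b x = (Ms k).H a b x)

/-- `(N, w)` is an `(f,g)`-renaming of `(M, w)` along the signature renaming `r`. -/
def IsRenamedModel (r : SigHom S T) (M : KModel S W D) (N : KModel T W D) : Prop :=
  N.worlds = M.worlds ∧
  (∀ a b, N.rel a b ↔ M.rel a b) ∧
  (∀ w ∈ M.worlds, N.dom w = M.dom w) ∧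
  (∀ w ∈ M.worlds, ∀ (P : S.Pred) (t : Fin (S.arity P) → D),
      ((fun i => t (Fin.cast (r.arity_eq P) i)) ∈ N.interpP w (r.predMap P) ↔ t ∈ M.interpP w P)) ∧
  (∀ w ∈ M.worlds, ∀ c, N.interpC w (r.constMap c) = M.interpC w c) ∧
  (∀ a b, M.rel a b → ∀ x ∈ M.dom a, N.H a b x = M.H a b x)

/-- Membership of `N` in the set `(M,w) ⊕ (c̄/ā)` of possible constant extensions:
`[M,w] ⊆ N↾Θ ⊆ M` and the fresh constants denote `ā` at `w`. -/
def InOplus (M : KModel S W D) (w : W) {n : ℕ} (a : Fin n → D)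
    (N : KModel (S.addConsts n) W D) : Prop :=
  Submodel (genSub M w) (reductHom (S.incConsts n) N) ∧
  Submodel (reductHom (S.incConsts n) N) M ∧
  (∀ i, N.interpC w (Sum.inr i) = a i)


section UnravelTypeHelpers

variable {S : Sig} {W D : Type*}

private lemma getLast?_of_ne_nil {l : List W} (h : l ≠ []) (w : W) :
    l.getLast? = some (l.getLastD w) := by
  obtain ⟨x, hx⟩ := Option.isSome_iff_exists.mp (List.getLast?_isSome.mpr h)
  simp [List.getLastD_eq_getLast?, hx]

private lemma getLastD_indep {l : List W} (h : l ≠ []) (d d' : W) :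
    l.getLastD d = l.getLastD d' := by
  cases l with
  | nil => exact absurd rfl h
  | cons a t => simp only [List.getLastD_cons]

private lemma getLastD_append' {e : List W} (he : e ≠ []) :
    ∀ (l : List W) (d : W), (l ++ e).getLastD d = e.getLastD d
  | [], d => rfl
  | a :: l, d => by
    rw [List.cons_append, List.getLastD_cons, getLastD_append' he l a,
      getLastD_indep he a d]

private lemma chain_rel_last (M : KModel S W D) (w : W) :
    ∀ (l : List W) (x : W), List.Chain M.rel x l → x ∈ M.worlds →
      M.rel x ((x :: l).getLastD w)
  | [], x, _, hx => by simpa using M.rel_refl hx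
  | y :: l, x, h, hx => by
    simp only [List.Chain, List.isChain_cons_cons] at h
    have h2 := chain_rel_last M w l y h.2 (M.rel_mem h.1).2
    rw [List.getLastD_cons, List.getLastD_cons]
    rw [List.getLastD_cons] at h2
    exact M.rel_trans h.1 h2

private lemma unChains_cons {M : KModel S W D} {w : W} {l : List W}
    (h : l ∈ unChains M w) : ∃ t, l = w :: t := by
  obtain ⟨hne, hh, -⟩ := h
  cases l with
  | nil => exact absurd rfl hne
  | cons a t =>
      simp only [List.head?_cons, Option.some.injEq] at hh
      exact ⟨t, by rw [hh]⟩

private lemma rel_w_last {M : KModel S W D} {w : W} (hw : w ∈ M.worlds) {l : List W}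
    (h : l ∈ unChains M w) : M.rel w (l.getLastD w) := by
  obtain ⟨t, rfl⟩ := unChains_cons h
  exact chain_rel_last M w t w h.2.2 hw

private lemma last_mem_worlds {M : KModel S W D} {w : W} (hw : w ∈ M.worlds) {l : List W}
    (h : l ∈ unChains M w) : l.getLastD w ∈ M.worlds :=
  (M.rel_mem (rel_w_last hw h)).2

private lemma unChains_prefix {M : KModel S W D} {w : W} {p q : List W}
    (hq : q ∈ unChains M w) (hpq : p <+: q) (hp : p ≠ []) : p ∈ unChains M w := by
  refine ⟨hp, ?_, hq.2.2.prefix hpq⟩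
  obtain ⟨r, rfl⟩ := hpq
  cases p with
  | nil => exact absurd rfl hp
  | cons a t => simpa using hq.2.1

private lemma unStep_rel_last {M : KModel S W D} {w : W} {s t : List W}
    (h : unStep M w s t) : M.rel (s.getLastD w) (t.getLastD w) := by
  obtain ⟨hs, ht, u, rfl⟩ := h
  have hc := ht.2.2
  simp only [List.Chain'] at hc
  rw [List.isChain_append] at hc
  have hlink := hc.2.2 (s.getLastD w)
    (Option.mem_def.mpr (getLast?_of_ne_nil hs.1 w)) u rfl
  rw [List.getLastD_concat]
  exact hlink

private lemma unRel_rel_last {M : KModel S W D} {w : W} (hw : w ∈ M.worlds) {s t : List W}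
    (h : unRel M w s t) : M.rel (s.getLastD w) (t.getLastD w) := by
  obtain ⟨hs, -, hrt⟩ := h
  induction hrt with
  | refl => exact M.rel_refl (last_mem_worlds hw hs)
  | tail _ h2 ih => exact M.rel_trans ih (unStep_rel_last h2)

private lemma unRel_exists_append {M : KModel S W D} {w : W} {s t : List W}
    (h : unRel M w s t) : ∃ e, t = s ++ e := by
  obtain ⟨-, -, hrt⟩ := h
  induction hrt with
  | refl => exact ⟨[], by simp⟩
  | tail _ h2 ih =>
      obtain ⟨e, rfl⟩ := ih
      obtain ⟨-, -, u, rfl⟩ := h2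
      exact ⟨e ++ [u], by simp⟩

private lemma unRel_append {M : KModel S W D} {w : W} {l : List W} (hl : l ∈ unChains M w) :
    ∀ e, l ++ e ∈ unChains M w → unRel M w l (l ++ e) := by
  intro e
  induction e using List.reverseRecOn with
  | nil =>
      intro h
      refine ⟨hl, h, ?_⟩
      rw [List.append_nil]
  | append_singleton e u ih =>
      intro h
      have hmid : l ++ e ∈ unChains M w := by
        refine unChains_prefix h ⟨[u], by simp⟩ ?_
        intro hE
        exact hl.1 (List.append_eq_nil_iff.mp hE).1
      refine ⟨hl, h, ?_⟩
      refine Relation.ReflTransGen.tail (ih hmid).2.2 ?_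
      exact ⟨hmid, h, u, by rw [List.append_assoc]⟩

private lemma unRel_transport {M : KModel S W D} {w : W} {l₁ l₂ v₂ : List W}
    (h₁ : l₁ ∈ unChains M w) (h₂ : l₂ ∈ unChains M w)
    (hl : l₁.getLastD w = l₂.getLastD w) (h : unRel M w l₂ v₂) :
    ∃ v₁, unRel M w l₁ v₁ ∧ v₁.getLastD w = v₂.getLastD w := by
  obtain ⟨e, rfl⟩ := unRel_exists_append h
  rcases eq_or_ne e [] with rfl | he
  · exact ⟨l₁, ⟨h₁, h₁, Relation.ReflTransGen.refl⟩, by simpa using hl⟩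
  · have hv₂ : l₂ ++ e ∈ unChains M w := h.2.1
    have hchain := hv₂.2.2
    simp only [List.Chain'] at hchain
    rw [List.isChain_append] at hchain
    have hne1 : l₁ ≠ [] := h₁.1
    have hchain1 : List.Chain' M.rel (l₁ ++ e) := by
      simp only [List.Chain']
      rw [List.isChain_append]
      refine ⟨h₁.2.2, hchain.2.1, ?_⟩
      intro x hx y hy
      rw [Option.mem_def, getLast?_of_ne_nil hne1 w, Option.some.injEq] at hx
      refine hchain.2.2 x ?_ y hy
      rw [Option.mem_def, getLast?_of_ne_nil h₂.1 w, Option.some.injEq, ← hl, ← hx]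
    have hv₁ : l₁ ++ e ∈ unChains M w := by
      refine ⟨fun hE => hne1 (List.append_eq_nil_iff.mp hE).1, ?_, hchain1⟩
      obtain ⟨t, rfl⟩ := unChains_cons h₁
      simp
    exact ⟨l₁ ++ e, unRel_append h₁ e hv₁,
      by rw [getLastD_append' he, getLastD_append' he]⟩

private lemma snoc_pair {n : ℕ} (b : Fin n → D) (x : D) (l : List W) :
    (Fin.snoc (α := fun _ => D × List W) (fun i => (b i, l)) (x, l)) =
      (fun i => ((Fin.snoc (α := fun _ => D) b x i), l)) := by
  funext i
  refine Fin.lastCases ?_ ?_ i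
  · simp
  · intro j; simp

private lemma sat_transport {M : KModel S W D} {w : W} (hw : w ∈ M.worlds)
    {U : KModel S (List W) (D × List W)} (hU : IsUnravelling M w U) :
    ∀ {n : ℕ} (φ : Fml S n) (l₁ l₂ : List W), l₁ ∈ unChains M w → l₂ ∈ unChains M w →
      l₁.getLastD w = l₂.getLastD w → ∀ (a : Fin n → D),
      (∀ i, a i ∈ M.dom (l₁.getLastD w)) →
      Sat U l₁ φ (fun i => (a i, l₁)) → Sat U l₂ φ (fun i => (a i, l₂)) := by
  obtain ⟨hUw, hUrel, hUdom, hUP, hUC, hUH⟩ := hU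
  intro n φ
  induction φ with
  | @atom n P ts =>
      intro l₁ l₂ h₁ h₂ hl a ha hs
      set t₀ : Fin (S.arity P) → D := fun i =>
        match ts i with
        | .var j => a j
        | .const c => M.interpC (l₁.getLastD w) c with ht₀
      have hev : ∀ (l : List W), l ∈ unChains M w → l.getLastD w = l₁.getLastD w →
          ∀ i, Term.eval U l (fun j => (a j, l)) (ts i) = (t₀ i, l) := by
        intro l hlm hll i
        cases hts : ts i with
        | var j => simp [Term.eval, ht₀, hts]
        | const c => simp only [hts, Term.eval, ht₀, hUC l hlm c, hll]
      simp only [Sat] at hs ⊢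
      rw [funext (hev l₁ h₁ rfl)] at hs
      rw [funext (hev l₂ h₂ hl.symm)]
      rw [hUP l₁ h₁ P] at hs
      rw [hUP l₂ h₂ P]
      obtain ⟨t', ht', hteq⟩ := hs
      have ht'' : t' = t₀ := funext fun i => by
        have := (hteq i).symm
        rw [Prod.mk.injEq] at this
        exact this.1
      subst ht''
      rw [hl] at ht'
      exact ⟨t₀, ht', fun i => rfl⟩
  | bot =>
      intro l₁ l₂ h₁ h₂ hl a ha hs
      exact hs.elim
  | and φ ψ ihφ ihψ =>
      intro l₁ l₂ h₁ h₂ hl a ha hs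
      exact ⟨ihφ l₁ l₂ h₁ h₂ hl a ha hs.1, ihψ l₁ l₂ h₁ h₂ hl a ha hs.2⟩
  | or φ ψ ihφ ihψ =>
      intro l₁ l₂ h₁ h₂ hl a ha hs
      rcases hs with hs | hs
      · exact Or.inl (ihφ l₁ l₂ h₁ h₂ hl a ha hs)
      · exact Or.inr (ihψ l₁ l₂ h₁ h₂ hl a ha hs)
  | @imp n φ ψ ihφ ihψ =>
      intro l₁ l₂ h₁ h₂ hl a ha hs v₂ hrel₂ hsat₂
      have hur₂ : unRel M w l₂ v₂ := (hUrel l₂ v₂).mp hrel₂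
      obtain ⟨v₁, hur₁, hvl⟩ := unRel_transport h₁ h₂ hl hur₂
      have hv₁ : v₁ ∈ unChains M w := hur₁.2.1
      have hv₂ : v₂ ∈ unChains M w := hur₂.2.1
      have hrelM₁ : M.rel (l₁.getLastD w) (v₁.getLastD w) := unRel_rel_last hw hur₁
      set b : Fin n → D := fun i => M.H (l₁.getLastD w) (v₁.getLastD w) (a i) with hb
      have hb₁ : ∀ i, b i ∈ M.dom (v₁.getLastD w) := fun i => M.H_mem hrelM₁ (ha i)
      have e1 : (fun i => U.H l₁ v₁ (a i, l₁)) = fun i => (b i, v₁) :=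
        funext fun i => hUH l₁ v₁ hur₁ (a i) (ha i)
      have e2 : (fun i => U.H l₂ v₂ (a i, l₂)) = fun i => (b i, v₂) := by
        funext i
        rw [hUH l₂ v₂ hur₂ (a i) (hl ▸ ha i)]
        simp only [hb, hl, hvl]
      beta_reduce at hsat₂
      rw [e2] at hsat₂
      have hsat₁ := ihφ v₂ v₁ hv₂ hv₁ hvl.symm b (fun i => hvl ▸ hb₁ i) hsat₂
      have hψ₁ := hs v₁ ((hUrel l₁ v₁).mpr hur₁) (by beta_reduce; rw [e1]; exact hsat₁)
      beta_reduce at hψ₁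
      rw [e1] at hψ₁
      beta_reduce
      rw [e2]
      exact ihψ v₁ v₂ hv₁ hv₂ hvl b hb₁ hψ₁
  | @all n φ ih =>
      intro l₁ l₂ h₁ h₂ hl a ha hs v₂ hrel₂ x hx
      have hur₂ : unRel M w l₂ v₂ := (hUrel l₂ v₂).mp hrel₂
      obtain ⟨v₁, hur₁, hvl⟩ := unRel_transport h₁ h₂ hl hur₂
      have hv₁ : v₁ ∈ unChains M w := hur₁.2.1
      have hv₂ : v₂ ∈ unChains M w := hur₂.2.1
      have hrelM₁ : M.rel (l₁.getLastD w) (v₁.getLastD w) := unRel_rel_last hw hur₁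
      set b : Fin n → D := fun i => M.H (l₁.getLastD w) (v₁.getLastD w) (a i) with hb
      have hb₁ : ∀ i, b i ∈ M.dom (v₁.getLastD w) := fun i => M.H_mem hrelM₁ (ha i)
      have e1 : (fun i => U.H l₁ v₁ (a i, l₁)) = fun i => (b i, v₁) :=
        funext fun i => hUH l₁ v₁ hur₁ (a i) (ha i)
      have e2 : (fun i => U.H l₂ v₂ (a i, l₂)) = fun i => (b i, v₂) := by
        funext i
        rw [hUH l₂ v₂ hur₂ (a i) (hl ▸ ha i)]
        simp only [hb, hl, hvl]
      rw [hUdom v₂ hv₂] at hx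
      obtain ⟨hx2, hx1⟩ := hx
      have hx1' : (x.1, v₁) ∈ U.dom v₁ := by
        rw [hUdom v₁ hv₁]
        exact ⟨rfl, hvl.symm ▸ hx1⟩
      have hsv₁ := hs v₁ ((hUrel l₁ v₁).mpr hur₁) (x.1, v₁) hx1'
      beta_reduce at hsv₁
      rw [e1, snoc_pair] at hsv₁
      have hdom' : ∀ i, (Fin.snoc (α := fun _ => D) b x.1) i ∈ M.dom (v₁.getLastD w) := by
        intro i
        refine Fin.lastCases ?_ ?_ i
        · rw [Fin.snoc_last]; exact hvl.symm ▸ hx1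
        · intro j; rw [Fin.snoc_castSucc]; exact hb₁ j
      have hres := ih v₁ v₂ hv₁ hv₂ hvl (Fin.snoc (α := fun _ => D) b x.1) hdom' hsv₁
      have hxeq : x = (x.1, v₂) := by rw [← hx2]
      rw [hxeq]
      beta_reduce
      rw [e2, snoc_pair]
      exact hres
  | @ex n φ ih =>
      intro l₁ l₂ h₁ h₂ hl a ha hs
      obtain ⟨x, hx, hsx⟩ := hs
      rw [hUdom l₁ h₁] at hx
      obtain ⟨hx2, hx1⟩ := hx
      have hxeq : x = (x.1, l₁) := by rw [← hx2]
      rw [hxeq, snoc_pair] at hsx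
      have hdom' : ∀ i, (Fin.snoc (α := fun _ => D) a x.1) i ∈ M.dom (l₁.getLastD w) := by
        intro i
        refine Fin.lastCases ?_ ?_ i
        · rw [Fin.snoc_last]; exact hx1
        · intro j; rw [Fin.snoc_castSucc]; exact ha j
      refine ⟨(x.1, l₂), ?_, ?_⟩
      · rw [hUdom l₂ h₂]
        exact ⟨rfl, hl ▸ hx1⟩
      · rw [snoc_pair]
        exact ih l₁ l₂ h₁ h₂ hl (Fin.snoc (α := fun _ => D) a x.1) hdom' hsx

end UnravelTypeHelpers

/-- In the unravelling, the complete IL-type of a tuple depends only on the last world of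
the sequence. -/
theorem unravelling_type_last {S : Sig} {W D : Type*} (M : KModel S W D) (w : W)
    (hw : w ∈ M.worlds) (U : KModel S (List W) (D × List W)) (hU : IsUnravelling M w U)
    (l₁ l₂ : List W) (h₁ : l₁ ∈ unChains M w) (h₂ : l₂ ∈ unChains M w)
    (hlast : l₁.getLastD w = l₂.getLastD w) {n : ℕ} (a : Fin n → D)
    (ha : ∀ i, a i ∈ M.dom (l₁.getLastD w)) :
    Tp U l₁ (fun i => (a i, l₁)) = Tp U l₂ (fun i => (a i, l₂)) := by
  have hiff : ∀ (φ : Fml S n), Sat U l₁ φ (fun i => (a i, l₁)) ↔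
      Sat U l₂ φ (fun i => (a i, l₂)) := fun φ =>
    ⟨fun h => sat_transport hw hU φ l₁ l₂ h₁ h₂ hlast a ha h,
     fun h => sat_transport hw hU φ l₂ l₁ h₂ h₁ hlast.symm a (fun i => hlast ▸ ha i) h⟩
  unfold Tp
  have hpos : {φ : Fml S n | Sat U l₁ φ (fun i => (a i, l₁))} =
      {φ | Sat U l₂ φ (fun i => (a i, l₂))} := Set.ext fun φ => hiff φ
  have hneg : {φ : Fml S n | ¬ Sat U l₁ φ (fun i => (a i, l₁))} =
      {φ | ¬ Sat U l₂ φ (fun i => (a i, l₂))} := Set.ext fun φ => not_congr (hiff φ)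
  rw [hpos, hneg]
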